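/- Let p > 1 be a real number, n ≥ 1, α = (α_1,...,α_n) a multi-index of non-negative integers, and z = x + iy ∈ ℂⁿ with y_j > 0 for every j. Then ∫_{ℝⁿ} ∏_{j=1}^n |ξ_j − conj(z_j)|^{−p(α_j+1)} dξ = π^{n/2} ∏_{j=1}^n [Γ(−1/2 + p(α_j+1)/2) / Γ(p(α_j+1)/2)] · (1/y_j)^{p(α_j+1)−1}. -/

import Mathlib

open MeasureTheory

open Real Set in
private lemma core_integral {q : ℝ} (hq : 1 < q) :
    ∫ s : ℝ, (1 + s ^ 2) ^ (-(q / 2)) =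
      Real.sqrt π * Real.Gamma ((q - 1) / 2) / Real.Gamma (q / 2) := by
  have ha : 0 < q / 2 := by linarith
  have ha' : 0 < (q - 1) / 2 := by linarith
  have hGpos := Real.Gamma_pos_of_pos ha
  have hG'pos := Real.Gamma_pos_of_pos ha'
  -- integrability of the Gamma-type integrand
  have hGint : ∀ r : ℝ, 0 < r →
      IntegrableOn (fun t : ℝ => t ^ (q / 2 - 1) * Real.exp (-(r * t))) (Ioi 0) := by
    intro r hr
    have h := integrableOn_rpow_mul_exp_neg_mul_rpow (p := 1) (s := q / 2 - 1) (b := r)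
      (by linarith) one_pos hr
    refine h.congr_fun (fun t ht => ?_) measurableSet_Ioi
    dsimp only; rw [Real.rpow_one, neg_mul]
  have hmeas : Measurable fun s : ℝ => (1 + s ^ 2) ^ (-(q / 2)) := by
    fun_prop
  set L : ENNReal := ∫⁻ s : ℝ, ENNReal.ofReal ((1 + s ^ 2) ^ (-(q / 2))) with hL
  have key : ENNReal.ofReal (Real.Gamma (q / 2)) * L =
      ENNReal.ofReal (Real.sqrt π * Real.Gamma ((q - 1) / 2)) := by
    have step1 : ENNReal.ofReal (Real.Gamma (q / 2)) * L =
        ∫⁻ s : ℝ, ∫⁻ t in Ioi 0,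
          ENNReal.ofReal (t ^ (q / 2 - 1) * Real.exp (-t) * Real.exp (-(t * s ^ 2))) := by
      rw [hL, ← lintegral_const_mul' _ _ ENNReal.ofReal_ne_top]
      refine lintegral_congr fun s => ?_
      have hs : (0 : ℝ) < 1 + s ^ 2 := by positivity
      have h1 : Real.Gamma (q / 2) * (1 + s ^ 2) ^ (-(q / 2)) =
          ∫ t in Ioi 0, t ^ (q / 2 - 1) * Real.exp (-t) * Real.exp (-(t * s ^ 2)) := by
        have h2 := Real.integral_rpow_mul_exp_neg_mul_Ioi ha hs
        have h3 : ∀ t : ℝ, t ^ (q / 2 - 1) * Real.exp (-((1 + s ^ 2) * t)) =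
            t ^ (q / 2 - 1) * Real.exp (-t) * Real.exp (-(t * s ^ 2)) := by
          intro t
          rw [mul_assoc, ← Real.exp_add]
          ring_nf
        simp_rw [h3] at h2
        rw [h2, one_div, Real.inv_rpow hs.le, ← Real.rpow_neg hs.le, mul_comm]
      rw [← ENNReal.ofReal_mul hGpos.le, h1]
      refine ofReal_integral_eq_lintegral_ofReal ?_ ?_
      · have := hGint (1 + s ^ 2) hs
        refine this.congr_fun (fun t ht => ?_) measurableSet_Ioi
        rw [mul_assoc, ← Real.exp_add]; ring_nf
      · filter_upwards [ae_restrict_mem measurableSet_Ioi] with t ht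
        have ht' : (0:ℝ) < t := ht
        positivity
    have hswap :
        (∫⁻ s : ℝ, ∫⁻ t in Ioi 0,
            ENNReal.ofReal (t ^ (q / 2 - 1) * Real.exp (-t) * Real.exp (-(t * s ^ 2)))) =
        ∫⁻ t in Ioi 0, ∫⁻ s : ℝ,
            ENNReal.ofReal (t ^ (q / 2 - 1) * Real.exp (-t) * Real.exp (-(t * s ^ 2))) :=
      lintegral_lintegral_swap (by fun_prop)
    have step3 :
        (∫⁻ t in Ioi 0, ∫⁻ s : ℝ,
            ENNReal.ofReal (t ^ (q / 2 - 1) * Real.exp (-t) * Real.exp (-(t * s ^ 2)))) =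
        ENNReal.ofReal (Real.sqrt π * Real.Gamma ((q - 1) / 2)) := by
      have hcong : ∀ t ∈ Ioi (0:ℝ),
          (∫⁻ s : ℝ, ENNReal.ofReal
              (t ^ (q / 2 - 1) * Real.exp (-t) * Real.exp (-(t * s ^ 2)))) =
          ENNReal.ofReal (Real.sqrt π * (t ^ ((q - 1) / 2 - 1) * Real.exp (-t))) := by
        intro t ht
        have ht' : (0:ℝ) < t := ht
        have hC : (0:ℝ) ≤ t ^ (q / 2 - 1) * Real.exp (-t) := by positivity
        simp_rw [ENNReal.ofReal_mul hC]
        rw [lintegral_const_mul' _ _ ENNReal.ofReal_ne_top]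
        have hgauss : (∫⁻ s : ℝ, ENNReal.ofReal (Real.exp (-(t * s ^ 2)))) =
            ENNReal.ofReal (Real.sqrt (π / t)) := by
          have hg : (∫ s : ℝ, Real.exp (-(t * s ^ 2))) = Real.sqrt (π / t) := by
            simpa [neg_mul] using integral_gaussian t
          rw [← hg]
          refine (ofReal_integral_eq_lintegral_ofReal ?_ ?_).symm
          · simpa [neg_mul] using integrable_exp_neg_mul_sq ht'
          · filter_upwards with s; positivity
        rw [hgauss, ← ENNReal.ofReal_mul hC]
        congr 1
        have hts : t ^ (q / 2 - 1) * t ^ (-(1/2) : ℝ) = t ^ ((q - 1) / 2 - 1) := by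
          rw [← Real.rpow_add ht']
          congr 1; ring
        have hts' : Real.sqrt (π / t) = Real.sqrt π * t ^ (-(1/2) : ℝ) := by
          rw [Real.rpow_neg ht'.le, ← Real.sqrt_eq_rpow, mul_comm, ← div_eq_inv_mul,
            Real.sqrt_div Real.pi_pos.le]
        rw [hts']
        calc t ^ (q / 2 - 1) * Real.exp (-t) * (Real.sqrt π * t ^ (-(1/2) : ℝ))
            = Real.sqrt π * (t ^ (q / 2 - 1) * t ^ (-(1/2) : ℝ) * Real.exp (-t)) := by ring
          _ = Real.sqrt π * (t ^ ((q - 1) / 2 - 1) * Real.exp (-t)) := by rw [hts]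
      rw [setLIntegral_congr_fun measurableSet_Ioi hcong]
      simp_rw [ENNReal.ofReal_mul (Real.sqrt_nonneg π)]
      rw [lintegral_const_mul' _ _ ENNReal.ofReal_ne_top]
      have hint1 : IntegrableOn (fun t : ℝ => t ^ ((q - 1) / 2 - 1) * Real.exp (-t)) (Ioi 0) := by
        have h := integrableOn_rpow_mul_exp_neg_mul_rpow (p := 1) (s := (q - 1) / 2 - 1)
          (b := 1) (by linarith) one_pos one_pos
        refine h.congr_fun (fun t ht => ?_) measurableSet_Ioi
        dsimp only; rw [Real.rpow_one, neg_mul, one_mul]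
      have hnn : (fun _ : ℝ => (0:ℝ)) ≤ᵐ[volume.restrict (Ioi 0)]
          fun t : ℝ => t ^ ((q - 1) / 2 - 1) * Real.exp (-t) := by
        filter_upwards [ae_restrict_mem measurableSet_Ioi] with t ht
        have ht' : (0:ℝ) < t := ht
        positivity
      have h2 := Real.integral_rpow_mul_exp_neg_mul_Ioi ha' one_pos
      simp only [one_mul, one_div, inv_one, Real.one_rpow] at h2
      rw [← ofReal_integral_eq_lintegral_ofReal hint1 hnn, h2,
        ← ENNReal.ofReal_mul (Real.sqrt_nonneg π)]
    exact step1.trans (hswap.trans step3)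
  have hLval : L = ENNReal.ofReal (Real.sqrt π * Real.Gamma ((q - 1) / 2)) /
      ENNReal.ofReal (Real.Gamma (q / 2)) := by
    rw [ENNReal.eq_div_iff (by simp [hGpos]) ENNReal.ofReal_ne_top]
    exact key
  rw [integral_eq_lintegral_of_nonneg_ae
      (Filter.Eventually.of_forall fun s => by positivity) hmeas.aestronglyMeasurable,
    ← hL, hLval, ENNReal.toReal_div, ENNReal.toReal_ofReal
      (mul_nonneg (Real.sqrt_nonneg _) hG'pos.le), ENNReal.toReal_ofReal hGpos.le]

open Real Set in
private lemma coord_integral {q : ℝ} (hq : 1 < q) {y : ℝ} (hy : 0 < y) (x : ℝ) :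
    ∫ ξ : ℝ, ‖(ξ : ℂ) - ((x : ℂ) - (y : ℂ) * Complex.I)‖ ^ (-q) =
      Real.sqrt π *
        ((Real.Gamma (-(1 / 2) + q / 2) / Real.Gamma (q / 2)) * (1 / y) ^ (q - 1)) := by
  have habs : ∀ ξ : ℝ, ‖(ξ : ℂ) - ((x : ℂ) - (y : ℂ) * Complex.I)‖ ^ (-q) =
      ((ξ - x) ^ 2 + y ^ 2) ^ (-(q / 2)) := by
    intro ξ
    have hz : (ξ : ℂ) - ((x : ℂ) - (y : ℂ) * Complex.I) =
        ((ξ - x : ℝ) : ℂ) + (y : ℝ) * Complex.I := by push_cast; ring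
    rw [hz, Complex.norm_add_mul_I, Real.sqrt_eq_rpow, ← Real.rpow_mul (by positivity)]
    congr 1; ring
  simp_rw [habs]
  rw [MeasureTheory.integral_sub_right_eq_self (μ := volume)
    (fun t : ℝ => (t ^ 2 + y ^ 2) ^ (-(q / 2))) x]
  have hscale : ∫ t : ℝ, (t ^ 2 + y ^ 2) ^ (-(q / 2)) =
      y * ∫ s : ℝ, ((y * s) ^ 2 + y ^ 2) ^ (-(q / 2)) := by
    rw [MeasureTheory.Measure.integral_comp_mul_left
      (fun t : ℝ => (t ^ 2 + y ^ 2) ^ (-(q / 2))) y, smul_eq_mul, abs_of_pos (by positivity),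
      ← mul_assoc, mul_inv_cancel₀ hy.ne', one_mul]
  rw [hscale]
  have hpt : ∀ s : ℝ, ((y * s) ^ 2 + y ^ 2) ^ (-(q / 2)) =
      y ^ (-q) * (1 + s ^ 2) ^ (-(q / 2)) := by
    intro s
    have h1 : (y * s) ^ 2 + y ^ 2 = y ^ 2 * (1 + s ^ 2) := by ring
    rw [h1, Real.mul_rpow (by positivity) (by positivity)]
    congr 1
    rw [← Real.rpow_natCast y 2, ← Real.rpow_mul hy.le]
    congr 1; push_cast; ring
  simp_rw [hpt]
  rw [MeasureTheory.integral_const_mul, core_integral hq]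
  have hy1 : y * y ^ (-q) = (1 / y) ^ (q - 1) := by
    nth_rewrite 1 [← Real.rpow_one y]
    rw [← Real.rpow_add hy, one_div, ← Real.rpow_neg_one y, ← Real.rpow_mul hy.le]
    congr 1; ring
  have hGarg : (q - 1) / 2 = -(1 / 2) + q / 2 := by ring
  rw [hGarg, ← hy1]
  ring

theorem lp_norm_of_cauchy_szego_derivative
    (n : ℕ) (hn : 1 ≤ n) (p : ℝ) (hp : 1 < p) (α : Fin n → ℕ)
    (x y : Fin n → ℝ) (hy : ∀ j, 0 < y j) :
    (∫ ξ : Fin n → ℝ,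
        ∏ j, ‖(ξ j : ℂ) - ((x j : ℂ) - (y j : ℂ) * Complex.I)‖ ^
          (-(p * ((α j : ℝ) + 1)))) =
      Real.pi ^ ((n : ℝ) / 2) *
        ∏ j, (Real.Gamma (-(1 / 2) + p * ((α j : ℝ) + 1) / 2) /
              Real.Gamma (p * ((α j : ℝ) + 1) / 2)) *
          (1 / y j) ^ (p * ((α j : ℝ) + 1) - 1) := by
  rw [MeasureTheory.integral_fintype_prod_volume_eq_prod (f := fun (j : Fin n) (ξ : ℝ) =>
    ‖(ξ : ℂ) - ((x j : ℂ) - (y j : ℂ) * Complex.I)‖ ^ (-(p * ((α j : ℝ) + 1))))]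
  have hq : ∀ j : Fin n, 1 < p * ((α j : ℝ) + 1) := by
    intro j
    have h1 : (0:ℝ) ≤ (α j : ℝ) := (α j).cast_nonneg
    nlinarith
  have hstep : ∀ j : Fin n,
      (∫ ξ : ℝ, ‖(ξ : ℂ) - ((x j : ℂ) - (y j : ℂ) * Complex.I)‖ ^
        (-(p * ((α j : ℝ) + 1)))) =
      Real.sqrt Real.pi *
        ((Real.Gamma (-(1 / 2) + p * ((α j : ℝ) + 1) / 2) /
          Real.Gamma (p * ((α j : ℝ) + 1) / 2)) * (1 / y j) ^ (p * ((α j : ℝ) + 1) - 1)) :=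
    fun j => coord_integral (hq j) (hy j) (x j)
  rw [Finset.prod_congr rfl fun j _ => hstep j, Finset.prod_mul_distrib, Finset.prod_const,
    Finset.card_univ, Fintype.card_fin]
  congr 1
  rw [Real.sqrt_eq_rpow, ← Real.rpow_natCast (Real.pi ^ ((1:ℝ)/2)) n,
    ← Real.rpow_mul Real.pi_pos.le]
  congr 1; ring
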